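/- Let τ, κ ∈ ℝ and let y : ℝ → ℝ be a twice differentiable function satisfying y''(u) = −τ²·y(u) for all u. Define K(z,w) := y(z−w)/(z−w) for real z ≠ w. Then for all z ≠ w, ∂/∂z[ (κ²−z²)·∂K/∂z(z,w) ] − τ²z²·K(z,w) = ∂/∂w[ (κ²−w²)·∂K/∂w(z,w) ] − τ²w²·K(z,w). -/

import Mathlib

open Filter Topology

private lemma inner_z (y : ℝ → ℝ) (hy : Differentiable ℝ y) (w z' : ℝ) (h : z' ≠ w) :
    HasDerivAt (fun z'' => y (z'' - w) / (z'' - w))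
      ((deriv y (z' - w) * (z' - w) - y (z' - w)) / (z' - w) ^ 2) z' := by
  have h1 : HasDerivAt (fun z'' : ℝ => z'' - w) 1 z' := (hasDerivAt_id z').sub_const w
  have h2 : HasDerivAt (fun z'' => y (z'' - w)) (deriv y (z' - w) * 1) z' :=
    (hy (z' - w)).hasDerivAt.comp z' h1
  have := h2.div h1 (sub_ne_zero.mpr h)
  simp only [mul_one] at this
  exact this

private lemma inner_w (y : ℝ → ℝ) (hy : Differentiable ℝ y) (z w' : ℝ) (h : z ≠ w') :
    HasDerivAt (fun w'' => y (z - w'') / (z - w''))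
      ((-(deriv y (z - w')) * (z - w') + y (z - w')) / (z - w') ^ 2) w' := by
  have h1 : HasDerivAt (fun w'' : ℝ => z - w'') (-1) w' := (hasDerivAt_id w').const_sub z
  have h2 : HasDerivAt (fun w'' => y (z - w'')) (deriv y (z - w') * (-1)) w' :=
    (hy (z - w')).hasDerivAt.comp w' h1
  have := h2.div h1 (sub_ne_zero.mpr h)
  have e : (deriv y (z - w') * (-1) * (z - w') - y (z - w') * (-1)) / (z - w') ^ 2
      = (-(deriv y (z - w')) * (z - w') + y (z - w')) / (z - w') ^ 2 := by ring
  rwa [e] at this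

/-- Kernel symmetry `D_z K = D_w K` underlying the Landau–Pollak–Slepian commutation:
for any twice differentiable `y` with `y'' = −τ²y`, the kernel `K(z,w) = y(z−w)/(z−w)`
satisfies `∂_z[(κ²−z²)∂_z K] − τ²z²K = ∂_w[(κ²−w²)∂_w K] − τ²w²K` off the diagonal. -/
theorem sinc_kernel_symmetry (τ κ : ℝ) (y : ℝ → ℝ)
    (hy : Differentiable ℝ y) (hy' : Differentiable ℝ (deriv y))
    (hode : ∀ u : ℝ, deriv (deriv y) u = -(τ ^ 2) * y u) :
    let K : ℝ → ℝ → ℝ := fun z w => y (z - w) / (z - w)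
    ∀ z w : ℝ, z ≠ w →
      deriv (fun z' => (κ ^ 2 - z' ^ 2) * deriv (fun z'' => K z'' w) z') z -
          τ ^ 2 * z ^ 2 * K z w =
        deriv (fun w' => (κ ^ 2 - w' ^ 2) * deriv (fun w'' => K z w'') w') w -
          τ ^ 2 * w ^ 2 * K z w := by
  intro K z w hzw
  have hu : z - w ≠ 0 := sub_ne_zero.mpr hzw
  set A := y (z - w) with hA
  set B := deriv y (z - w) with hB
  -- derivative helpers at z - w
  have h1z : HasDerivAt (fun z' : ℝ => z' - w) 1 z := (hasDerivAt_id z).sub_const w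
  have hAz : HasDerivAt (fun z' => y (z' - w)) (B * 1) z :=
    (hy (z - w)).hasDerivAt.comp z h1z
  have hBz : HasDerivAt (fun z' => deriv y (z' - w)) (deriv (deriv y) (z - w) * 1) z :=
    HasDerivAt.comp (h₂ := deriv y) z (hy' (z - w)).hasDerivAt h1z
  have hDen : HasDerivAt (fun z' : ℝ => (z' - w) ^ 2) (2 * (z - w) ^ 1 * 1) z := h1z.pow 2
  -- z side: rewrite inner deriv near z
  have hz_eq : deriv (fun z' => (κ ^ 2 - z' ^ 2) * deriv (fun z'' => K z'' w) z') z
      = deriv (fun z' => (κ ^ 2 - z' ^ 2) *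
          ((deriv y (z' - w) * (z' - w) - y (z' - w)) / (z' - w) ^ 2)) z := by
    apply Filter.EventuallyEq.deriv_eq
    filter_upwards [eventually_ne_nhds hzw] with z' hz'
    rw [(inner_z y hy w z' hz').deriv]
  have hNumz : HasDerivAt (fun z' => deriv y (z' - w) * (z' - w) - y (z' - w))
      (deriv (deriv y) (z - w) * 1 * (z - w) + B * 1 - B * 1) z :=
    (hBz.mul h1z).sub hAz
  have hGz : HasDerivAt (fun z' => (deriv y (z' - w) * (z' - w) - y (z' - w)) / (z' - w) ^ 2)
      (((deriv (deriv y) (z - w) * 1 * (z - w) + B * 1 - B * 1) * (z - w) ^ 2 -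
        (B * (z - w) - A) * (2 * (z - w) ^ 1 * 1)) / ((z - w) ^ 2) ^ 2) z :=
    hNumz.div hDen (pow_ne_zero 2 hu)
  have hκz : HasDerivAt (fun z' : ℝ => κ ^ 2 - z' ^ 2) (-(2 * z ^ 1 * 1)) z :=
    ((hasDerivAt_id z).pow 2).const_sub (κ ^ 2)
  have hFz := (hκz.mul hGz).deriv
  simp only [Pi.mul_def] at hFz
  -- w side
  have h1w : HasDerivAt (fun w' : ℝ => z - w') (-1) w := (hasDerivAt_id w).const_sub z
  have hAw : HasDerivAt (fun w' => y (z - w')) (B * (-1)) w :=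
    (hy (z - w)).hasDerivAt.comp w h1w
  have hBw : HasDerivAt (fun w' => deriv y (z - w')) (deriv (deriv y) (z - w) * (-1)) w :=
    (hy' (z - w)).hasDerivAt.comp w h1w
  have hDenw : HasDerivAt (fun w' : ℝ => (z - w') ^ 2) (2 * (z - w) ^ 1 * (-1)) w := h1w.pow 2
  have hw_eq : deriv (fun w' => (κ ^ 2 - w' ^ 2) * deriv (fun w'' => K z w'') w') w
      = deriv (fun w' => (κ ^ 2 - w' ^ 2) *
          ((-(deriv y (z - w')) * (z - w') + y (z - w')) / (z - w') ^ 2)) w := by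
    apply Filter.EventuallyEq.deriv_eq
    filter_upwards [eventually_ne_nhds hzw.symm] with w' hw'
    rw [(inner_w y hy z w' (Ne.symm hw')).deriv]
  have hNumw : HasDerivAt (fun w' => -(deriv y (z - w')) * (z - w') + y (z - w'))
      (-(deriv (deriv y) (z - w) * (-1)) * (z - w) + -B * (-1) + B * (-1)) w :=
    ((hBw.neg.mul h1w).add hAw)
  have hGw : HasDerivAt
      (fun w' => (-(deriv y (z - w')) * (z - w') + y (z - w')) / (z - w') ^ 2)
      (((-(deriv (deriv y) (z - w) * (-1)) * (z - w) + -B * (-1) + B * (-1)) * (z - w) ^ 2 -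
        (-B * (z - w) + A) * (2 * (z - w) ^ 1 * (-1))) / ((z - w) ^ 2) ^ 2) w :=
    hNumw.div hDenw (pow_ne_zero 2 hu)
  have hκw : HasDerivAt (fun w' : ℝ => κ ^ 2 - w' ^ 2) (-(2 * w ^ 1 * 1)) w :=
    ((hasDerivAt_id w).pow 2).const_sub (κ ^ 2)
  have hFw := (hκw.mul hGw).deriv
  simp only [Pi.mul_def] at hFw
  rw [hz_eq, hw_eq, hFz, hFw]
  have hC : deriv (deriv y) (z - w) = -(τ ^ 2) * A := hode (z - w)
  show _ - τ ^ 2 * z ^ 2 * (A / (z - w)) = _ - τ ^ 2 * w ^ 2 * (A / (z - w))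
  rw [hC]
  field_simp
  ring
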